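/- With notation as above, the homomorphism φ : Λ_g[p] → ℤ/pℤ given by φ(A) = (1/p)(A·e₁ ∧ e₁) mod p is surjective. Consequently the abelianization H₁(Λ_g[p];ℤ) has order at least p. -/

import Mathlib

open Matrix

/-- With `Λ = Λ_g[p] ≤ Sp(2g,ℤ)` the subgroup of symplectic matrices `A` with
`A·e₁ = e₁ + p·a₁` (i.e. `A·e₁ ≡ e₁ mod p`), the homomorphism
`φ(A) = (1/p)(A·e₁ ∧ e₁) mod p` to `ℤ/pℤ` is surjective; consequently the abelianization
`H₁(Λ_g[p];ℤ)` has order (cardinality) at least `p`. -/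
theorem stmt1 (g : ℕ) (hg : 0 < g) (p : ℕ) (hp : 0 < p)
    (e₁ : (Fin g ⊕ Fin g) → ℤ) (he : e₁ = Pi.single (Sum.inr ⟨0, hg⟩) 1)
    (Λ : Subgroup (Matrix.symplecticGroup (Fin g) ℤ))
    (hΛ : ∀ A : Matrix.symplecticGroup (Fin g) ℤ,
      A ∈ Λ ↔ ∃ u, (A : Matrix (Fin g ⊕ Fin g) (Fin g ⊕ Fin g) ℤ) *ᵥ e₁ = e₁ + (p : ℤ) • u)
    (φ : Λ → ZMod p)
    (hhom : ∀ A B : Λ, φ (A * B) = φ A + φ B)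
    (hφ : ∀ A : Λ, φ A =
      (((((A : Matrix.symplecticGroup (Fin g) ℤ) :
          Matrix (Fin g ⊕ Fin g) (Fin g ⊕ Fin g) ℤ) *ᵥ e₁) ⬝ᵥ
          (Matrix.J (Fin g) ℤ *ᵥ e₁) / (p : ℤ) : ℤ) : ZMod p)) :
    Function.Surjective φ ∧ (p : Cardinal) ≤ Cardinal.mk (Abelianization Λ) := by
  haveI : NeZero p := ⟨hp.ne'⟩
  set i0 : Fin g := ⟨0, hg⟩
  set B : Matrix (Fin g) (Fin g) ℤ := (p : ℤ) • Matrix.single i0 i0 1 with hB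
  have hBT : Bᵀ = B := by
    ext i j
    simp [hB, Matrix.single, and_comm]
  set M : Matrix (Fin g ⊕ Fin g) (Fin g ⊕ Fin g) ℤ := fromBlocks 1 B 0 1 with hM
  have hMsp : M ∈ Matrix.symplecticGroup (Fin g) ℤ := by
    rw [SymplecticGroup.mem_iff, hM, Matrix.J, fromBlocks_transpose, fromBlocks_multiply,
      fromBlocks_multiply, hBT]
    simp
  have hMcol : M *ᵥ e₁ = e₁ + (p : ℤ) • Pi.single (Sum.inl i0) 1 := by
    rw [he, mulVec_single]
    funext i
    rcases i with a | a
    · by_cases h : a = i0 <;>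
        simp [hM, hB, fromBlocks, Matrix.single, Pi.single_apply, h, eq_comm]
    · by_cases h : a = i0 <;>
        simp [hM, hB, fromBlocks, Pi.single_apply, one_apply, h, eq_comm]
  set T : Λ := ⟨⟨M, hMsp⟩, (hΛ ⟨M, hMsp⟩).2 ⟨Pi.single (Sum.inl i0) 1, hMcol⟩⟩ with hT
  have hJe : Matrix.J (Fin g) ℤ *ᵥ e₁ = -Pi.single (Sum.inl i0) 1 := by
    rw [he, mulVec_single]
    funext i
    rcases i with a | a <;>
      by_cases h : a = i0 <;>
        simp [Matrix.J, fromBlocks, Pi.single_apply, one_apply, h, eq_comm]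
  have hφT : φ T = -1 := by
    rw [hφ T]
    have h1 : ((T : Matrix.symplecticGroup (Fin g) ℤ) :
        Matrix (Fin g ⊕ Fin g) (Fin g ⊕ Fin g) ℤ) *ᵥ e₁ = M *ᵥ e₁ := rfl
    have h2 : (M *ᵥ e₁) ⬝ᵥ (Matrix.J (Fin g) ℤ *ᵥ e₁) = -(p : ℤ) := by
      rw [hJe, dotProduct_neg, dotProduct_single, mul_one, hMcol]
      simp [Pi.single_apply, he]
    rw [h1, h2]
    have hpz : (p : ℤ) ≠ 0 := by exact_mod_cast hp.ne'
    have : (-(p : ℤ)) / (p : ℤ) = -1 := by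
      rw [show (-(p:ℤ)) = (p:ℤ) * (-1) by ring, Int.mul_ediv_cancel_left _ hpz]
    rw [this]
    push_cast
    ring
  have hφ1 : φ 1 = 0 := by
    have := hhom 1 1
    rw [mul_one] at this
    exact (left_eq_add.mp this)
  have hφTinv : φ T⁻¹ = 1 := by
    have h := hhom T T⁻¹
    rw [mul_inv_cancel, hφ1, hφT] at h
    linear_combination -h
  have hpow : ∀ n : ℕ, φ (T⁻¹ ^ n) = n := by
    intro n
    induction n with
    | zero => simpa using hφ1
    | succ n ih => rw [pow_succ, hhom, ih, hφTinv]; push_cast; ring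
  have hsurj : Function.Surjective φ := by
    intro c
    exact ⟨T⁻¹ ^ c.val, by rw [hpow]; exact ZMod.natCast_rightInverse c⟩
  refine ⟨hsurj, ?_⟩
  let f : Λ →* Multiplicative (ZMod p) :=
    { toFun := fun A => Multiplicative.ofAdd (φ A)
      map_one' := by show Multiplicative.ofAdd (φ 1) = 1; rw [hφ1]; rfl
      map_mul' := fun A B => by
        show Multiplicative.ofAdd (φ (A * B)) =
          Multiplicative.ofAdd (φ A) * Multiplicative.ofAdd (φ B)
        rw [hhom A B]; rfl }
  have hFs : Function.Surjective (Abelianization.lift f) := by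
    intro c
    obtain ⟨A, hA⟩ := hsurj (Multiplicative.toAdd c)
    refine ⟨Abelianization.of A, ?_⟩
    rw [Abelianization.lift_apply_of]
    show Multiplicative.ofAdd (φ A) = c
    rw [hA]
    rfl
  have hle := Cardinal.mk_le_of_surjective hFs
  refine le_trans (le_of_eq ?_) hle
  rw [Cardinal.mk_fintype]
  norm_num [ZMod.card]
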